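/- arXiv:1212.6342 — 2 statements merged into one kernel-verified Lean document; each statement's English description precedes it below -/
import Mathlib

section
/- Let 0 < σ < 1/2 and let α, β > −1 with δ := max(α+1, β+1, 1/2). For 1 ≤ q < δ/(δ−σ), one has sup_{0<φ<π} ∫₀^π ((θ+φ)^{−2α−1}(2π−θ−φ)^{−2β−1}|θ−φ|^{2σ−1})^q dμ_{α,β}(θ) < ∞. Consequently, the integral operator with kernel K₆(θ,φ) = (θ+φ)^{−2α−1}(2π−θ−φ)^{−2β−1}|θ−φ|^{2σ−1} is bounded from L¹(dμ_{α,β}) to L^q(dμ_{α,β}) for every such q. -/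
set_option maxHeartbeats 1000000

open Real MeasureTheory Set
open scoped ENNReal

noncomputable def jacobiMeasure (α β : ℝ) : Measure ℝ :=
  (volume.restrict (Set.Ioo 0 π)).withDensity
    (fun φ => ENNReal.ofReal ((Real.sin (φ / 2)) ^ (2 * α + 1) * (Real.cos (φ / 2)) ^ (2 * β + 1)))


lemma pi_ge_one : (1:ℝ) ≤ π := by linarith [Real.pi_gt_three]

lemma rpow_neg_le_aux {x t s : ℝ} (hx : 0 < x) (hxπ : x ≤ π) (hts : t ≤ s) :
    x ^ (-t) ≤ π ^ (s - t) * x ^ (-s) := by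
  have h1 : x ^ (-t) = x ^ (s - t) * x ^ (-s) := by
    rw [← Real.rpow_add hx]; ring_nf
  rw [h1]
  exact mul_le_mul_of_nonneg_right (Real.rpow_le_rpow hx.le hxπ (by linarith))
    (Real.rpow_nonneg hx.le _)

lemma mul_rpow_neg_le_add {x y u b : ℝ} (hx : 0 < x) (hy : 0 < y) (hu : 0 ≤ u) (hb : 0 ≤ b) :
    x ^ (-u) * y ^ (-b) ≤ x ^ (-(u + b)) + y ^ (-(u + b)) := by
  rcases le_total x y with h | h
  · have h1 : y ^ (-b) ≤ x ^ (-b) := Real.rpow_le_rpow_of_nonpos hx h (by linarith)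
    have h2 : x ^ (-u) * y ^ (-b) ≤ x ^ (-u) * x ^ (-b) :=
      mul_le_mul_of_nonneg_left h1 (Real.rpow_nonneg hx.le _)
    have h3 : x ^ (-u) * x ^ (-b) = x ^ (-(u + b)) := by
      rw [← Real.rpow_add hx]; ring_nf
    calc x ^ (-u) * y ^ (-b) ≤ x ^ (-(u+b)) := by rw [← h3]; exact h2
    _ ≤ _ := le_add_of_nonneg_right (Real.rpow_nonneg hy.le _)
  · have h1 : x ^ (-u) ≤ y ^ (-u) := Real.rpow_le_rpow_of_nonpos hy h (by linarith)
    have h2 : x ^ (-u) * y ^ (-b) ≤ y ^ (-u) * y ^ (-b) :=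
      mul_le_mul_of_nonneg_right h1 (Real.rpow_nonneg hy.le _)
    have h3 : y ^ (-u) * y ^ (-b) = y ^ (-(u + b)) := by
      rw [← Real.rpow_add hy]; ring_nf
    calc x ^ (-u) * y ^ (-b) ≤ y ^ (-(u+b)) := by rw [← h3]; exact h2
    _ ≤ _ := le_add_of_nonneg_left (Real.rpow_nonneg hx.le _)

lemma keyP (e q b : ℝ) (he : -1 < e) (hq : 1 ≤ q) (hb0 : 0 < b) (hb1 : b < 1)
    (hc : 0 ≤ e → e * (q - 1) + b < 1) :
    ∃ C : ℝ, 0 < C ∧ ∃ s : ℝ, 0 ≤ s ∧ s < 1 ∧ ∀ x y : ℝ, x ∈ Ioo 0 π → y ∈ Ioo 0 π →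
      (x + y) ^ (-e * q) * x ^ e * |x - y| ^ (-b) ≤ C * (x ^ (-s) + |x - y| ^ (-s)) := by
  rcases le_or_gt 0 e with he0 | he0
  · -- case e ≥ 0
    have hu0 : 0 ≤ e * (q - 1) := mul_nonneg he0 (by linarith)
    refine ⟨1, one_pos, e * (q - 1) + b, by linarith, hc he0, fun x y hx hy => ?_⟩
    have hx0 := hx.1
    have hy0 := hy.1
    rcases eq_or_ne x y with rfl | hxy
    · have : |x - x| ^ (-b) = 0 := by
        rw [sub_self, abs_zero, Real.zero_rpow (by linarith)]
      rw [this, mul_zero, one_mul]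
      positivity
    · have hd : 0 < |x - y| := abs_pos.2 (sub_ne_zero.2 hxy)
      have heq0 : -e * q ≤ 0 := by nlinarith
      have h1 : (x + y) ^ (-e * q) ≤ x ^ (-e * q) :=
        Real.rpow_le_rpow_of_nonpos hx0 (by linarith) heq0
      have h2 : (x + y) ^ (-e * q) * x ^ e * |x - y| ^ (-b)
          ≤ x ^ (-(e * (q - 1))) * |x - y| ^ (-b) := by
        have hx' : x ^ (-e * q) * x ^ e = x ^ (-(e * (q - 1))) := by
          rw [← Real.rpow_add hx0]; ring_nf
        rw [← hx']
        exact mul_le_mul_of_nonneg_right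
          (mul_le_mul_of_nonneg_right h1 (Real.rpow_nonneg hx0.le _))
          (Real.rpow_nonneg hd.le _)
      have h3 := mul_rpow_neg_le_add hx0 hd hu0 hb0.le
      rw [one_mul]
      exact h2.trans h3
  · -- case e < 0
    set p := -e with hp
    have hp0 : 0 < p := by simp [hp]; linarith
    have hp1 : p < 1 := by simp [hp]; linarith
    set s := max b p with hs
    have hbs : b ≤ s := le_max_left _ _
    have hps : p ≤ s := le_max_right _ _
    have hs0 : 0 ≤ s := le_trans hb0.le hbs
    have hs1 : s < 1 := max_lt hb1 hp1
    set C1 : ℝ := 3 ^ (p * q) * π ^ (p * (q - 1)) * π ^ (s - b) with hC1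
    set C2 : ℝ := 2 ^ (p * q + b) * π ^ (p * q - b) * π ^ (s - p) with hC2
    set C3 : ℝ := 2 ^ (p * q + b) * π ^ (s - (b - p * (q - 1))) with hC3
    have hπ := Real.pi_pos
    have hC1p : 0 < C1 := by positivity
    have hC2p : 0 < C2 := by positivity
    have hC3p : 0 < C3 := by positivity
    clear_value C1 C2 C3
    have hpq0 : 0 ≤ p * q := mul_nonneg hp0.le (by linarith)
    have hpq1 : 0 ≤ p * (q - 1) := mul_nonneg hp0.le (by linarith)
    clear_value s
    refine ⟨C1 + C2 + C3, by positivity, s, hs0, hs1, fun x y hx hy => ?_⟩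
    obtain ⟨hx0, hxπ⟩ := hx
    have hxπ := hxπ.le
    obtain ⟨hy0, hyπ⟩ := hy
    have hyπ := hyπ.le
    have hRHS : 0 ≤ x ^ (-s) + |x - y| ^ (-s) := by positivity
    rcases eq_or_ne x y with rfl | hxy
    · have : |x - x| ^ (-b) = 0 := by
        rw [sub_self, abs_zero, Real.zero_rpow (by linarith)]
      rw [this, mul_zero]
      positivity
    have hd : 0 < |x - y| := abs_pos.2 (sub_ne_zero.2 hxy)
    have hdπ : |x - y| ≤ π := by
      rw [abs_sub_le_iff]; constructor <;> linarith
    have hEQ : (x + y) ^ (-e * q) * x ^ e = (x + y) ^ (p * q) * x ^ (-p) := by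
      rw [hp]; ring_nf
    rw [hEQ]
    have key : (x + y) ^ (p * q) * x ^ (-p) * |x - y| ^ (-b)
        ≤ C1 * |x - y| ^ (-s) + (C2 + C3) * x ^ (-s) := by
      rcases le_or_gt y (2 * x) with hcase | hcase
      · -- y ≤ 2x
        have h1 : (x + y) ^ (p * q) ≤ 3 ^ (p * q) * x ^ (p * q) := by
          rw [← Real.mul_rpow (by norm_num) hx0.le]
          exact Real.rpow_le_rpow (by linarith) (by linarith) hpq0
        have h2 : x ^ (p * q) * x ^ (-p) = x ^ (p * (q - 1)) := by
          rw [← Real.rpow_add hx0]; ring_nf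
        have h3 : x ^ (p * (q - 1)) ≤ π ^ (p * (q - 1)) :=
          Real.rpow_le_rpow hx0.le hxπ hpq1
        have h4 : |x - y| ^ (-b) ≤ π ^ (s - b) * |x - y| ^ (-s) :=
          rpow_neg_le_aux hd hdπ hbs
        have h5 : (x + y) ^ (p * q) * x ^ (-p) ≤ 3 ^ (p * q) * π ^ (p * (q - 1)) := by
          calc (x + y) ^ (p * q) * x ^ (-p)
              ≤ 3 ^ (p * q) * x ^ (p * q) * x ^ (-p) :=
                mul_le_mul_of_nonneg_right h1 (Real.rpow_nonneg hx0.le _)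
            _ = 3 ^ (p * q) * x ^ (p * (q - 1)) := by rw [mul_assoc, h2]
            _ ≤ _ := mul_le_mul_of_nonneg_left h3 (by positivity)
        calc (x + y) ^ (p * q) * x ^ (-p) * |x - y| ^ (-b)
            ≤ (3 ^ (p * q) * π ^ (p * (q - 1))) * (π ^ (s - b) * |x - y| ^ (-s)) :=
              mul_le_mul h5 h4 (Real.rpow_nonneg hd.le _) (by positivity)
          _ = C1 * |x - y| ^ (-s) := by rw [hC1]; ring
          _ ≤ _ := le_add_of_nonneg_right (by positivity)
      · -- 2x < y
        have hxy2 : x < y := by linarith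
        have hd2 : y / 2 ≤ |x - y| := by
          rw [abs_sub_comm, abs_of_pos (by linarith)]; linarith
        have h1 : (x + y) ^ (p * q) ≤ 2 ^ (p * q) * y ^ (p * q) := by
          rw [← Real.mul_rpow (by norm_num) hy0.le]
          exact Real.rpow_le_rpow (by linarith) (by linarith) hpq0
        have h2 : |x - y| ^ (-b) ≤ 2 ^ b * y ^ (-b) := by
          have := Real.rpow_le_rpow_of_nonpos (by linarith : (0:ℝ) < y / 2) hd2
            (by linarith : -b ≤ 0)
          calc |x - y| ^ (-b) ≤ (y / 2) ^ (-b) := this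
            _ = 2 ^ b * y ^ (-b) := by
              rw [Real.div_rpow hy0.le (by norm_num), Real.rpow_neg (by norm_num : (0:ℝ) ≤ 2),
                div_eq_mul_inv, inv_inv]
              ring
        have hmain : (x + y) ^ (p * q) * x ^ (-p) * |x - y| ^ (-b)
            ≤ 2 ^ (p * q + b) * y ^ (p * q - b) * x ^ (-p) := by
          have e1 : 2 ^ (p * q) * y ^ (p * q) * x ^ (-p) * (2 ^ b * y ^ (-b))
              = 2 ^ (p * q + b) * y ^ (p * q - b) * x ^ (-p) := by
            rw [Real.rpow_add (by norm_num : (0:ℝ) < 2), show p * q - b = p * q + -b by ring,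
              Real.rpow_add hy0]
            ring
          calc (x + y) ^ (p * q) * x ^ (-p) * |x - y| ^ (-b)
              ≤ 2 ^ (p * q) * y ^ (p * q) * x ^ (-p) * (2 ^ b * y ^ (-b)) := by
                apply mul_le_mul _ h2 (Real.rpow_nonneg hd.le _) (by positivity)
                exact mul_le_mul_of_nonneg_right h1 (Real.rpow_nonneg hx0.le _)
            _ = _ := e1
        rcases le_or_gt b (p * q) with hbpq | hbpq
        · -- b ≤ pq
          have h3 : y ^ (p * q - b) ≤ π ^ (p * q - b) :=
            Real.rpow_le_rpow hy0.le hyπ (by linarith)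
          have h4 : x ^ (-p) ≤ π ^ (s - p) * x ^ (-s) := rpow_neg_le_aux hx0 hxπ hps
          calc (x + y) ^ (p * q) * x ^ (-p) * |x - y| ^ (-b)
              ≤ 2 ^ (p * q + b) * y ^ (p * q - b) * x ^ (-p) := hmain
            _ ≤ 2 ^ (p * q + b) * π ^ (p * q - b) * (π ^ (s - p) * x ^ (-s)) := by
                apply mul_le_mul _ h4 (Real.rpow_nonneg hx0.le _) (by positivity)
                exact mul_le_mul_of_nonneg_left h3 (by positivity)
            _ = C2 * x ^ (-s) := by rw [hC2]; ring
            _ ≤ _ := by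
                have hr : (C2 + C3) * x ^ (-s) = C2 * x ^ (-s) + C3 * x ^ (-s) := by ring
                linarith [mul_nonneg hC3p.le (Real.rpow_nonneg hx0.le (-s)),
                  mul_nonneg hC1p.le (Real.rpow_nonneg hd.le (-s))]
        · -- pq < b
          have h3 : y ^ (p * q - b) ≤ x ^ (p * q - b) :=
            Real.rpow_le_rpow_of_nonpos hx0 hxy2.le (by linarith)
          have h4 : x ^ (p * q - b) * x ^ (-p) = x ^ (-(b - p * (q - 1))) := by
            rw [← Real.rpow_add hx0]; ring_nf
          have h5 : x ^ (-(b - p * (q - 1))) ≤ π ^ (s - (b - p * (q - 1))) * x ^ (-s) :=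
            rpow_neg_le_aux hx0 hxπ (by linarith [hbs, hpq1])
          calc (x + y) ^ (p * q) * x ^ (-p) * |x - y| ^ (-b)
              ≤ 2 ^ (p * q + b) * y ^ (p * q - b) * x ^ (-p) := hmain
            _ ≤ 2 ^ (p * q + b) * (x ^ (p * q - b) * x ^ (-p)) := by
                rw [mul_assoc]
                apply mul_le_mul_of_nonneg_left _ (by positivity)
                exact mul_le_mul_of_nonneg_right h3 (Real.rpow_nonneg hx0.le _)
            _ = 2 ^ (p * q + b) * x ^ (-(b - p * (q - 1))) := by rw [h4]
            _ ≤ 2 ^ (p * q + b) * (π ^ (s - (b - p * (q - 1))) * x ^ (-s)) :=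
                mul_le_mul_of_nonneg_left h5 (by positivity)
            _ = C3 * x ^ (-s) := by rw [hC3]; ring
            _ ≤ _ := by
                have hr : (C2 + C3) * x ^ (-s) = C2 * x ^ (-s) + C3 * x ^ (-s) := by ring
                linarith [mul_nonneg hC2p.le (Real.rpow_nonneg hx0.le (-s)),
                  mul_nonneg hC1p.le (Real.rpow_nonneg hd.le (-s))]
    calc (x + y) ^ (p * q) * x ^ (-p) * |x - y| ^ (-b)
        ≤ C1 * |x - y| ^ (-s) + (C2 + C3) * x ^ (-s) := key
      _ ≤ (C1 + C2 + C3) * (x ^ (-s) + |x - y| ^ (-s)) := by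
          have hr : (C1 + C2 + C3) * (x ^ (-s) + |x - y| ^ (-s))
              = C1 * |x - y| ^ (-s) + (C2 + C3) * x ^ (-s)
                + (C1 * x ^ (-s) + (C2 + C3) * |x - y| ^ (-s)) := by ring
          have h1 : 0 ≤ C1 * x ^ (-s) := mul_nonneg hC1p.le (Real.rpow_nonneg hx0.le _)
          have h2 : 0 ≤ (C2 + C3) * |x - y| ^ (-s) :=
            mul_nonneg (by linarith) (Real.rpow_nonneg hd.le _)
          linarith

lemma sin_pow_bound (a : ℝ) : ∃ c : ℝ, 0 < c ∧ ∀ θ ∈ Ioo (0:ℝ) π,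
    Real.sin (θ/2) ^ a ≤ c * θ ^ a := by
  rcases le_or_gt 0 a with ha | ha
  · refine ⟨1, one_pos, fun θ hθ => ?_⟩
    obtain ⟨h0, h1⟩ := hθ
    have hs : Real.sin (θ/2) ≤ θ := le_trans (Real.sin_le (by linarith)) (by linarith)
    have hsn : 0 ≤ Real.sin (θ/2) :=
      Real.sin_nonneg_of_nonneg_of_le_pi (by linarith) (by linarith)
    rw [one_mul]
    exact Real.rpow_le_rpow hsn hs ha
  · refine ⟨π ^ (-a), Real.rpow_pos_of_pos Real.pi_pos _, fun θ hθ => ?_⟩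
    obtain ⟨h0, h1⟩ := hθ
    have hπ := Real.pi_pos
    have hlow : θ / π ≤ Real.sin (θ/2) := by
      have := Real.mul_le_sin (x := θ/2) (by linarith) (by linarith)
      calc θ / π = 2 / π * (θ/2) := by field_simp
        _ ≤ _ := this
    have hq : 0 < θ / π := by positivity
    have h2 : Real.sin (θ/2) ^ a ≤ (θ / π) ^ a :=
      Real.rpow_le_rpow_of_nonpos hq hlow ha.le
    have h3 : (θ / π) ^ a = π ^ (-a) * θ ^ a := by
      rw [Real.div_rpow h0.le hπ.le, Real.rpow_neg hπ.le]
      ring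
    rw [← h3]; exact h2

lemma cos_pow_bound (a : ℝ) : ∃ c : ℝ, 0 < c ∧ ∀ θ ∈ Ioo (0:ℝ) π,
    Real.cos (θ/2) ^ a ≤ c * (π - θ) ^ a := by
  obtain ⟨c, hc, h⟩ := sin_pow_bound a
  refine ⟨c, hc, fun θ hθ => ?_⟩
  have h1 : π - θ ∈ Ioo (0:ℝ) π := ⟨by linarith [hθ.2], by linarith [hθ.1]⟩
  have h2 := h (π - θ) h1
  have h3 : Real.sin ((π - θ)/2) = Real.cos (θ/2) := by
    rw [show (π - θ)/2 = π/2 - θ/2 by ring, Real.sin_pi_div_two_sub]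
  rwa [h3] at h2

lemma rpow_in_bounds {m M x : ℝ} (r : ℝ) (hm : 0 < m) (h1 : m ≤ x) (h2 : x ≤ M) :
    x ^ r ≤ max (m ^ r) (M ^ r) := by
  rcases le_or_gt 0 r with hr | hr
  · exact le_max_of_le_right (Real.rpow_le_rpow (by linarith) h2 hr)
  · exact le_max_of_le_left (Real.rpow_le_rpow_of_nonpos hm h1 hr.le)

lemma arith (α β σ q : ℝ) (hα : -1 < α) (hβ : -1 < β) (hσ0 : 0 < σ) (hσ : σ < 1/2)
    (hq1 : 1 ≤ q)
    (hq : q < max (max (α + 1) (β + 1)) (1/2) / (max (max (α + 1) (β + 1)) (1/2) - σ)) :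
    (0 < (1 - 2*σ)*q) ∧ ((1 - 2*σ)*q < 1) ∧
    (0 ≤ 2*α+1 → (2*α+1) * (q - 1) + (1 - 2*σ)*q < 1) ∧
    (0 ≤ 2*β+1 → (2*β+1) * (q - 1) + (1 - 2*σ)*q < 1) := by
  set δ := max (max (α + 1) (β + 1)) (1/2) with hδ
  have hδh : (1:ℝ)/2 ≤ δ := le_max_right _ _
  have hδα : α + 1 ≤ δ := le_trans (le_max_left _ _) (le_max_left _ _)
  have hδβ : β + 1 ≤ δ := le_trans (le_max_right _ _) (le_max_left _ _)
  have hδσ : 0 < δ - σ := by linarith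
  have hqδ : q * (δ - σ) < δ := (lt_div_iff₀ hδσ).1 hq
  have h1 : 0 < (1 - 2*σ)*q := by nlinarith
  refine ⟨h1, ?_, ?_, ?_⟩
  · nlinarith [mul_lt_mul_of_pos_left hqδ (show (0:ℝ) < 1 - 2*σ by linarith),
      mul_nonneg hσ0.le (show (0:ℝ) ≤ 2*δ - 1 by linarith)]
  · intro hae
    nlinarith [mul_le_mul_of_nonneg_right (show 2*α+1 ≤ 2*δ-1 by linarith)
      (show (0:ℝ) ≤ q - 1 by linarith)]
  · intro hbe
    nlinarith [mul_le_mul_of_nonneg_right (show 2*β+1 ≤ 2*δ-1 by linarith)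
      (show (0:ℝ) ≤ q - 1 by linarith)]

lemma master (α β σ q : ℝ) (hα : -1 < α) (hβ : -1 < β) (hσ0 : 0 < σ) (hσ : σ < 1/2)
    (hq1 : 1 ≤ q)
    (hq : q < max (max (α + 1) (β + 1)) (1/2) / (max (max (α + 1) (β + 1)) (1/2) - σ)) :
    ∃ C : ℝ, 0 < C ∧ ∃ sa sb : ℝ, 0 ≤ sa ∧ sa < 1 ∧ 0 ≤ sb ∧ sb < 1 ∧
      ∀ θ φ : ℝ, θ ∈ Ioo 0 π → φ ∈ Ioo 0 π →
        ((θ + φ) ^ (-2*α - 1) * (2*π - θ - φ) ^ (-2*β - 1) * |θ - φ| ^ (2*σ - 1)) ^ q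
            * (Real.sin (θ/2) ^ (2*α + 1) * Real.cos (θ/2) ^ (2*β + 1))
          ≤ C * (θ ^ (-sa) + (π - θ) ^ (-sb) + |θ - φ| ^ (-sa) + |θ - φ| ^ (-sb)) := by
  have hπ := Real.pi_pos
  obtain ⟨hb0, hb1, hca, hcb⟩ := arith α β σ q hα hβ hσ0 hσ hq1 hq
  set b := (1 - 2*σ)*q with hbdef
  obtain ⟨Ca, hCa, sa, hsa0, hsa1, bndA⟩ := keyP (2*α+1) q b (by linarith) hq1 hb0 hb1 hca
  obtain ⟨Cb, hCb, sb, hsb0, hsb1, bndB⟩ := keyP (2*β+1) q b (by linarith) hq1 hb0 hb1 hcb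
  obtain ⟨ca, hcΑ, bndSa⟩ := sin_pow_bound (2*α+1)
  obtain ⟨cb, hcΒ, bndSb⟩ := cos_pow_bound (2*β+1)
  set MA : ℝ := max ((π/2) ^ ((-2*α-1)*q)) ((2*π) ^ ((-2*α-1)*q)) with hMA
  set MA2 : ℝ := max ((π/2) ^ (2*α+1)) (π ^ (2*α+1)) with hMA2
  set MB : ℝ := max ((π/2) ^ ((-2*β-1)*q)) ((2*π) ^ ((-2*β-1)*q)) with hMB
  set MB2 : ℝ := max ((π/2) ^ (2*β+1)) (π ^ (2*β+1)) with hMB2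
  have hMAp : 0 < MA := lt_max_of_lt_left (Real.rpow_pos_of_pos (by linarith) _)
  have hMA2p : 0 < MA2 := lt_max_of_lt_left (Real.rpow_pos_of_pos (by linarith) _)
  have hMBp : 0 < MB := lt_max_of_lt_left (Real.rpow_pos_of_pos (by linarith) _)
  have hMB2p : 0 < MB2 := lt_max_of_lt_left (Real.rpow_pos_of_pos (by linarith) _)
  refine ⟨ca * cb * (MB * MB2 * Ca + MA * MA2 * Cb), by positivity,
    sa, sb, hsa0, hsa1, hsb0, hsb1, fun θ φ hθ hφ => ?_⟩
  obtain ⟨hθ0, hθπ⟩ := hθ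
  obtain ⟨hφ0, hφπ⟩ := hφ
  have hsum : 0 < θ + φ := by linarith
  have hsum2 : 0 < 2*π - θ - φ := by linarith
  have habs : (0:ℝ) ≤ |θ - φ| := abs_nonneg _
  -- expand the power q
  have hexp : ((θ + φ) ^ (-2*α - 1) * (2*π - θ - φ) ^ (-2*β - 1) * |θ - φ| ^ (2*σ - 1)) ^ q
      = (θ + φ) ^ ((-2*α-1)*q) * (2*π - θ - φ) ^ ((-2*β-1)*q) * |θ - φ| ^ (-b) := by
    rw [Real.mul_rpow (by positivity) (Real.rpow_nonneg habs _),
      Real.mul_rpow (by positivity) (by positivity),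
      ← Real.rpow_mul hsum.le, ← Real.rpow_mul hsum2.le, ← Real.rpow_mul habs,
      show (2*σ - 1)*q = -b by rw [hbdef]; ring]
  rw [hexp]
  set A := (θ + φ) ^ ((-2*α-1)*q) with hA
  set B := (2*π - θ - φ) ^ ((-2*β-1)*q) with hB
  set D := |θ - φ| ^ (-b) with hD
  have hA0 : 0 ≤ A := Real.rpow_nonneg hsum.le _
  have hB0 : 0 ≤ B := Real.rpow_nonneg hsum2.le _
  have hD0 : 0 ≤ D := Real.rpow_nonneg habs _
  have hSa := bndSa θ ⟨hθ0, hθπ⟩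
  have hSb := bndSb θ ⟨hθ0, hθπ⟩
  have hSa0 : 0 ≤ Real.sin (θ/2) ^ (2*α+1) := Real.rpow_nonneg
    (Real.sin_nonneg_of_nonneg_of_le_pi (by linarith) (by linarith)) _
  have hSb0 : 0 ≤ Real.cos (θ/2) ^ (2*β+1) := Real.rpow_nonneg
    (Real.cos_nonneg_of_mem_Icc ⟨by linarith, by linarith⟩) _
  have hθp0 : 0 ≤ θ ^ (2*α+1) := Real.rpow_nonneg hθ0.le _
  have hπθ0 : 0 ≤ (π - θ) ^ (2*β+1) := Real.rpow_nonneg (by linarith) _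
  -- step 1: bound density factors
  have step1 : A * B * D * (Real.sin (θ/2) ^ (2*α + 1) * Real.cos (θ/2) ^ (2*β + 1))
      ≤ ca * cb * (A * θ ^ (2*α+1) * B * (π - θ) ^ (2*β+1) * D) := by
    have : Real.sin (θ/2) ^ (2*α + 1) * Real.cos (θ/2) ^ (2*β + 1)
        ≤ (ca * θ ^ (2*α+1)) * (cb * (π - θ) ^ (2*β+1)) :=
      mul_le_mul hSa hSb hSb0 (by positivity)
    calc A * B * D * (Real.sin (θ/2) ^ (2*α + 1) * Real.cos (θ/2) ^ (2*β + 1))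
        ≤ A * B * D * ((ca * θ ^ (2*α+1)) * (cb * (π - θ) ^ (2*β+1))) :=
          mul_le_mul_of_nonneg_left this (by positivity)
      _ = ca * cb * (A * θ ^ (2*α+1) * B * (π - θ) ^ (2*β+1) * D) := by ring
  refine step1.trans ?_
  -- step 2: case split on θ ≤ π/2
  have key : A * θ ^ (2*α+1) * B * (π - θ) ^ (2*β+1) * D
      ≤ MB * MB2 * Ca * (θ ^ (-sa) + |θ - φ| ^ (-sa))
        + MA * MA2 * Cb * ((π - θ) ^ (-sb) + |θ - φ| ^ (-sb)) := by
    rcases le_or_gt θ (π/2) with hhalf | hhalf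
    · -- B and (π-θ)^(2β+1) bounded
      have hBb : B ≤ MB := by
        rw [hB, hMB]
        exact rpow_in_bounds _ (by linarith) (by linarith) (by linarith)
      have hπθb : (π - θ) ^ (2*β+1) ≤ MB2 := by
        rw [hMB2]
        exact rpow_in_bounds _ (by linarith) (by linarith) (by linarith)
      have hbnd := bndA θ φ ⟨hθ0, hθπ⟩ ⟨hφ0, hφπ⟩
      have heq : (θ + φ) ^ (-(2*α+1) * q) * θ ^ (2*α+1) = A * θ ^ (2*α+1) := by
        rw [hA]; ring_nf
      rw [heq] at hbnd
      have h2 : A * θ ^ (2*α+1) * B * (π - θ) ^ (2*β+1) * D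
          ≤ MB * MB2 * (A * θ ^ (2*α+1) * D) := by
        have e1 : A * θ ^ (2*α+1) * B * (π - θ) ^ (2*β+1) * D
            = (B * (π - θ) ^ (2*β+1)) * (A * θ ^ (2*α+1) * D) := by ring
        have e2 : B * (π - θ) ^ (2*β+1) ≤ MB * MB2 :=
          mul_le_mul hBb hπθb hπθ0 hMBp.le
        rw [e1]
        exact mul_le_mul_of_nonneg_right e2
          (mul_nonneg (mul_nonneg hA0 hθp0) hD0)
      refine h2.trans ?_
      calc MB * MB2 * (A * θ ^ (2*α+1) * D)
          ≤ MB * MB2 * (Ca * (θ ^ (-sa) + |θ - φ| ^ (-sa))) :=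
            mul_le_mul_of_nonneg_left hbnd (by positivity)
        _ = MB * MB2 * Ca * (θ ^ (-sa) + |θ - φ| ^ (-sa)) := by ring
        _ ≤ _ := le_add_of_nonneg_right (mul_nonneg
            (mul_nonneg (mul_nonneg hMAp.le hMA2p.le) hCb.le)
            (add_nonneg (Real.rpow_nonneg (by linarith) _) (Real.rpow_nonneg habs _)))
    · -- A and θ^(2α+1) bounded
      have hAb : A ≤ MA := by
        rw [hA, hMA]
        exact rpow_in_bounds _ (by linarith) (by linarith) (by linarith)
      have hθb : θ ^ (2*α+1) ≤ MA2 := by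
        rw [hMA2]
        exact rpow_in_bounds _ (by linarith) (by linarith) (by linarith)
      have hπθmem : π - θ ∈ Ioo (0:ℝ) π := ⟨by linarith, by linarith⟩
      have hπφmem : π - φ ∈ Ioo (0:ℝ) π := ⟨by linarith, by linarith⟩
      have hbnd := bndB (π - θ) (π - φ) hπθmem hπφmem
      have heq : (π - θ + (π - φ)) ^ (-(2*β+1) * q) * (π - θ) ^ (2*β+1)
          = B * (π - θ) ^ (2*β+1) := by
        rw [hB, show π - θ + (π - φ) = 2*π - θ - φ by ring]; ring_nf
      have habs2 : |π - θ - (π - φ)| = |θ - φ| := by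
        rw [show π - θ - (π - φ) = -(θ - φ) by ring, abs_neg]
      rw [heq, habs2] at hbnd
      have h2 : A * θ ^ (2*α+1) * B * (π - θ) ^ (2*β+1) * D
          ≤ MA * MA2 * (B * (π - θ) ^ (2*β+1) * D) := by
        have e1 : A * θ ^ (2*α+1) * B * (π - θ) ^ (2*β+1) * D
            = (A * θ ^ (2*α+1)) * (B * (π - θ) ^ (2*β+1) * D) := by ring
        have e2 : A * θ ^ (2*α+1) ≤ MA * MA2 := mul_le_mul hAb hθb hθp0 hMAp.le
        rw [e1]
        exact mul_le_mul_of_nonneg_right e2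
          (mul_nonneg (mul_nonneg hB0 hπθ0) hD0)
      refine h2.trans ?_
      calc MA * MA2 * (B * (π - θ) ^ (2*β+1) * D)
          ≤ MA * MA2 * (Cb * ((π - θ) ^ (-sb) + |θ - φ| ^ (-sb))) :=
            mul_le_mul_of_nonneg_left hbnd (by positivity)
        _ = MA * MA2 * Cb * ((π - θ) ^ (-sb) + |θ - φ| ^ (-sb)) := by ring
        _ ≤ _ := le_add_of_nonneg_left (mul_nonneg
            (mul_nonneg (mul_nonneg hMBp.le hMB2p.le) hCa.le)
            (add_nonneg (Real.rpow_nonneg hθ0.le _) (Real.rpow_nonneg habs _)))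
  calc ca * cb * (A * θ ^ (2*α+1) * B * (π - θ) ^ (2*β+1) * D)
      ≤ ca * cb * (MB * MB2 * Ca * (θ ^ (-sa) + |θ - φ| ^ (-sa))
        + MA * MA2 * Cb * ((π - θ) ^ (-sb) + |θ - φ| ^ (-sb))) :=
        mul_le_mul_of_nonneg_left key (by positivity)
    _ ≤ _ := by
        have h1 : 0 ≤ θ ^ (-sa) := Real.rpow_nonneg hθ0.le _
        have h2 : 0 ≤ (π - θ) ^ (-sb) := Real.rpow_nonneg (by linarith) _
        have h3 : 0 ≤ |θ - φ| ^ (-sa) := Real.rpow_nonneg habs _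
        have h4 : 0 ≤ |θ - φ| ^ (-sb) := Real.rpow_nonneg habs _
        have hca0 : 0 ≤ ca * cb := by positivity
        have hK1 : 0 ≤ MB * MB2 * Ca := mul_nonneg (mul_nonneg hMBp.le hMB2p.le) hCa.le
        have hK2 : 0 ≤ MA * MA2 * Cb := mul_nonneg (mul_nonneg hMAp.le hMA2p.le) hCb.le
        have expand : ca * cb * (MB * MB2 * Ca + MA * MA2 * Cb)
              * (θ ^ (-sa) + (π - θ) ^ (-sb) + |θ - φ| ^ (-sa) + |θ - φ| ^ (-sb))
            = ca * cb * (MB * MB2 * Ca * (θ ^ (-sa) + |θ - φ| ^ (-sa))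
                + MA * MA2 * Cb * ((π - θ) ^ (-sb) + |θ - φ| ^ (-sb)))
              + (ca * cb * (MB * MB2 * Ca) * ((π - θ) ^ (-sb) + |θ - φ| ^ (-sb))
                + ca * cb * (MA * MA2 * Cb) * (θ ^ (-sa) + |θ - φ| ^ (-sa))) := by ring
        have e1 : 0 ≤ ca * cb * (MB * MB2 * Ca) * ((π - θ) ^ (-sb) + |θ - φ| ^ (-sb)) :=
          mul_nonneg (mul_nonneg hca0 hK1) (by linarith)
        have e2 : 0 ≤ ca * cb * (MA * MA2 * Cb) * (θ ^ (-sa) + |θ - φ| ^ (-sa)) :=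
          mul_nonneg (mul_nonneg hca0 hK2) (by linarith)
        linarith [expand.ge]

lemma onePiece (s c A : ℝ) (hs0 : 0 ≤ s) (hs1 : s < 1) (hA : 0 < A) :
    ∫⁻ θ in Ioo c (c + A), ENNReal.ofReal ((θ - c) ^ (-s))
      ≤ ENNReal.ofReal (A ^ (1 - s) / (1 - s)) := by
  have hII : IntervalIntegrable (fun x : ℝ => x ^ (-s)) volume 0 A :=
    intervalIntegral.intervalIntegrable_rpow' (by linarith)
  have hII2 : IntervalIntegrable (fun x : ℝ => (x - c) ^ (-s)) volume c (c + A) := by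
    have := hII.comp_sub_right c
    simpa [add_comm] using this
  have hInt : IntegrableOn (fun x : ℝ => (x - c) ^ (-s)) (Ioo c (c + A)) volume := by
    have := (intervalIntegrable_iff_integrableOn_Ioc_of_le (by linarith : c ≤ c + A)).1 hII2
    exact this.mono_set Ioo_subset_Ioc_self
  have hnn : 0 ≤ᵐ[volume.restrict (Ioo c (c + A))] fun x : ℝ => (x - c) ^ (-s) :=
    (ae_restrict_iff' measurableSet_Ioo).2
      (Filter.Eventually.of_forall fun θ hθ => Real.rpow_nonneg (by linarith [hθ.1]) _)
  rw [← ofReal_integral_eq_lintegral_ofReal hInt hnn]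
  apply ENNReal.ofReal_le_ofReal
  have hval : ∫ θ in Ioo c (c + A), (θ - c) ^ (-s) = A ^ (1 - s) / (1 - s) := by
    rw [← integral_Ioc_eq_integral_Ioo, ← intervalIntegral.integral_of_le (by linarith)]
    rw [intervalIntegral.integral_comp_sub_right (fun x => x ^ (-s)) c]
    simp only [sub_self, add_sub_cancel_left]
    rw [integral_rpow (Or.inl (by linarith : (-1:ℝ) < -s))]
    rw [Real.zero_rpow (by linarith : -s + 1 ≠ 0)]
    rw [show -s + 1 = 1 - s by ring]
    ring
  rw [hval]

lemma onePiece' (s c A : ℝ) (hs0 : 0 ≤ s) (hs1 : s < 1) (hA : 0 < A) :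
    ∫⁻ θ in Ioo (c - A) c, ENNReal.ofReal ((c - θ) ^ (-s))
      ≤ ENNReal.ofReal (A ^ (1 - s) / (1 - s)) := by
  have hII : IntervalIntegrable (fun x : ℝ => x ^ (-s)) volume 0 A :=
    intervalIntegral.intervalIntegrable_rpow' (by linarith)
  have hII2 : IntervalIntegrable (fun x : ℝ => (c - x) ^ (-s)) volume (c - A) c := by
    have := (hII.comp_sub_left c).symm
    simpa using this
  have hInt : IntegrableOn (fun x : ℝ => (c - x) ^ (-s)) (Ioo (c - A) c) volume := by
    have := (intervalIntegrable_iff_integrableOn_Ioc_of_le (by linarith : c - A ≤ c)).1 hII2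
    exact this.mono_set Ioo_subset_Ioc_self
  have hnn : 0 ≤ᵐ[volume.restrict (Ioo (c - A) c)] fun x : ℝ => (c - x) ^ (-s) :=
    (ae_restrict_iff' measurableSet_Ioo).2
      (Filter.Eventually.of_forall fun θ hθ => Real.rpow_nonneg (by linarith [hθ.2]) _)
  rw [← ofReal_integral_eq_lintegral_ofReal hInt hnn]
  apply ENNReal.ofReal_le_ofReal
  have hval : ∫ θ in Ioo (c - A) c, (c - θ) ^ (-s) = A ^ (1 - s) / (1 - s) := by
    rw [← integral_Ioc_eq_integral_Ioo, ← intervalIntegral.integral_of_le (by linarith)]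
    rw [intervalIntegral.integral_comp_sub_left (fun x => x ^ (-s)) c]
    simp only [sub_self, sub_sub_cancel]
    rw [integral_rpow (Or.inl (by linarith : (-1:ℝ) < -s))]
    rw [Real.zero_rpow (by linarith : -s + 1 ≠ 0)]
    rw [show -s + 1 = 1 - s by ring]
    ring
  rw [hval]

lemma intBound (s c : ℝ) (hs0 : 0 ≤ s) (hs1 : s < 1) (hc0 : 0 ≤ c) (hcπ : c ≤ π) :
    ∫⁻ θ in Ioo (0:ℝ) π, ENNReal.ofReal (|θ - c| ^ (-s))
      ≤ ENNReal.ofReal (2 * π / (1 - s)) := by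
  have hπ := Real.pi_pos
  have step1 : ∫⁻ θ in Ioo (0:ℝ) π, ENNReal.ofReal (|θ - c| ^ (-s))
      ≤ ∫⁻ θ in Ioo (c - π) (c + π), ENNReal.ofReal (|θ - c| ^ (-s)) :=
    lintegral_mono_set (fun x hx => ⟨by linarith [hx.1], by linarith [hx.2]⟩)
  have step2 : ∫⁻ θ in Ioo (c - π) (c + π), ENNReal.ofReal (|θ - c| ^ (-s))
      ≤ (∫⁻ θ in Ioo (c - π) c, ENNReal.ofReal (|θ - c| ^ (-s)))
        + ((∫⁻ θ in {c}, ENNReal.ofReal (|θ - c| ^ (-s)))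
          + ∫⁻ θ in Ioo c (c + π), ENNReal.ofReal (|θ - c| ^ (-s))) := by
    calc ∫⁻ θ in Ioo (c - π) (c + π), ENNReal.ofReal (|θ - c| ^ (-s))
        ≤ ∫⁻ θ in Ioo (c - π) c ∪ ({c} ∪ Ioo c (c + π)),
            ENNReal.ofReal (|θ - c| ^ (-s)) := by
          apply lintegral_mono_set
          intro x hx
          rcases lt_trichotomy x c with h | h | h
          · exact Or.inl ⟨hx.1, h⟩
          · exact Or.inr (Or.inl h)
          · exact Or.inr (Or.inr ⟨h, hx.2⟩)
      _ ≤ _ := le_trans (lintegral_union_le _ _ _)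
          (by gcongr; exact lintegral_union_le _ _ _)
  have hsing : ∫⁻ θ in ({c} : Set ℝ), ENNReal.ofReal (|θ - c| ^ (-s)) = 0 :=
    setLIntegral_measure_zero _ _ (Real.volume_singleton)
  have hright : ∫⁻ θ in Ioo c (c + π), ENNReal.ofReal (|θ - c| ^ (-s))
      ≤ ENNReal.ofReal (π / (1 - s)) := by
    have hcg : ∫⁻ θ in Ioo c (c + π), ENNReal.ofReal (|θ - c| ^ (-s))
        = ∫⁻ θ in Ioo c (c + π), ENNReal.ofReal ((θ - c) ^ (-s)) := by
      apply setLIntegral_congr_fun measurableSet_Ioo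
      exact fun θ hθ => by
        rw [abs_of_pos (by linarith [hθ.1] : (0:ℝ) < θ - c)]
    rw [hcg]
    refine (onePiece s c π hs0 hs1 hπ).trans (ENNReal.ofReal_le_ofReal ?_)
    have hnum : π ^ (1 - s) ≤ π := by
      have h1π : (1:ℝ) ≤ π := by linarith [Real.pi_gt_three]
      have := Real.rpow_le_rpow_of_exponent_le h1π (show 1 - s ≤ 1 by linarith)
      rwa [Real.rpow_one] at this
    gcongr
  have hleft : ∫⁻ θ in Ioo (c - π) c, ENNReal.ofReal (|θ - c| ^ (-s))
      ≤ ENNReal.ofReal (π / (1 - s)) := by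
    have hcg : ∫⁻ θ in Ioo (c - π) c, ENNReal.ofReal (|θ - c| ^ (-s))
        = ∫⁻ θ in Ioo (c - π) c, ENNReal.ofReal ((c - θ) ^ (-s)) := by
      apply setLIntegral_congr_fun measurableSet_Ioo
      exact fun θ hθ => by
        rw [abs_of_neg (by linarith [hθ.2] : θ - c < 0), neg_sub]
    rw [hcg]
    refine (onePiece' s c π hs0 hs1 hπ).trans (ENNReal.ofReal_le_ofReal ?_)
    have hnum : π ^ (1 - s) ≤ π := by
      have h1π : (1:ℝ) ≤ π := by linarith [Real.pi_gt_three]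
      have := Real.rpow_le_rpow_of_exponent_le h1π (show 1 - s ≤ 1 by linarith)
      rwa [Real.rpow_one] at this
    gcongr
  calc ∫⁻ θ in Ioo (0:ℝ) π, ENNReal.ofReal (|θ - c| ^ (-s))
      ≤ (∫⁻ θ in Ioo (c - π) c, ENNReal.ofReal (|θ - c| ^ (-s)))
        + ((∫⁻ θ in {c}, ENNReal.ofReal (|θ - c| ^ (-s)))
          + ∫⁻ θ in Ioo c (c + π), ENNReal.ofReal (|θ - c| ^ (-s))) := step1.trans step2
    _ ≤ ENNReal.ofReal (π / (1 - s)) + (0 + ENNReal.ofReal (π / (1 - s))) := by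
        rw [hsing]
        gcongr
    _ = ENNReal.ofReal (2 * π / (1 - s)) := by
        rw [zero_add, ← ENNReal.ofReal_add (div_nonneg hπ.le (by linarith)) (div_nonneg hπ.le (by linarith))]
        congr 1
        ring

lemma part1 (α β σ q : ℝ) (hα : -1 < α) (hβ : -1 < β) (hσ0 : 0 < σ) (hσ : σ < 1/2)
    (hq1 : 1 ≤ q)
    (hq : q < max (max (α + 1) (β + 1)) (1/2) / (max (max (α + 1) (β + 1)) (1/2) - σ)) :
    ∃ C : ℝ, 0 < C ∧ ∀ φ ∈ Set.Ioo (0 : ℝ) π,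
      (∫⁻ θ, ENNReal.ofReal
          (((θ + φ) ^ (-2 * α - 1) * (2 * π - θ - φ) ^ (-2 * β - 1) * |θ - φ| ^ (2 * σ - 1)) ^ q)
        ∂(jacobiMeasure α β)) ≤ ENNReal.ofReal C := by
  have hπ := Real.pi_pos
  obtain ⟨C₀, hC₀, sa, sb, hsa0, hsa1, hsb0, hsb1, bnd⟩ := master α β σ q hα hβ hσ0 hσ hq1 hq
  have h1sa : (0:ℝ) < 1 - sa := by linarith
  have h1sb : (0:ℝ) < 1 - sb := by linarith
  refine ⟨C₀ * (2*π/(1-sa) + 2*π/(1-sb) + 2*π/(1-sa) + 2*π/(1-sb)), by positivity,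
    fun φ hφ => ?_⟩
  have hwm : Measurable (fun θ : ℝ => ENNReal.ofReal
      ((Real.sin (θ / 2)) ^ (2 * α + 1) * (Real.cos (θ / 2)) ^ (2 * β + 1))) := by
    measurability
  have hgm : Measurable (fun θ : ℝ => ENNReal.ofReal
      (((θ + φ) ^ (-2 * α - 1) * (2 * π - θ - φ) ^ (-2 * β - 1) * |θ - φ| ^ (2 * σ - 1)) ^ q)) := by
    fun_prop
  rw [jacobiMeasure, lintegral_withDensity_eq_lintegral_mul _ hwm hgm]
  simp only [Pi.mul_apply]
  have hbound : ∀ᵐ θ ∂(volume.restrict (Ioo (0:ℝ) π)),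
      ENNReal.ofReal ((Real.sin (θ / 2)) ^ (2 * α + 1)
          * (Real.cos (θ / 2)) ^ (2 * β + 1))
        * ENNReal.ofReal
          (((θ + φ) ^ (-2 * α - 1) * (2 * π - θ - φ) ^ (-2 * β - 1)
            * |θ - φ| ^ (2 * σ - 1)) ^ q)
      ≤ ENNReal.ofReal C₀ * (ENNReal.ofReal (|θ - 0| ^ (-sa)) + ENNReal.ofReal (|θ - π| ^ (-sb))
          + ENNReal.ofReal (|θ - φ| ^ (-sa)) + ENNReal.ofReal (|θ - φ| ^ (-sb))) := by
    rw [ae_restrict_iff' measurableSet_Ioo]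
    refine Filter.Eventually.of_forall fun θ hθ => ?_
    obtain ⟨hθ0, hθπ⟩ := hθ
    have hd0 : 0 ≤ (Real.sin (θ / 2)) ^ (2 * α + 1) * (Real.cos (θ / 2)) ^ (2 * β + 1) := by
      apply mul_nonneg
      · exact Real.rpow_nonneg
          (Real.sin_nonneg_of_nonneg_of_le_pi (by linarith) (by linarith)) _
      · exact Real.rpow_nonneg (Real.cos_nonneg_of_mem_Icc ⟨by linarith, by linarith⟩) _
    rw [← ENNReal.ofReal_mul hd0]
    have hb := bnd θ φ ⟨hθ0, hθπ⟩ hφ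
    have e0 : |θ - (0:ℝ)| = θ := by rw [sub_zero, abs_of_pos hθ0]
    have eπ : |θ - π| = π - θ := by
      rw [abs_of_neg (by linarith : θ - π < 0), neg_sub]
    rw [e0, eπ]
    calc ENNReal.ofReal ((Real.sin (θ / 2)) ^ (2 * α + 1) * (Real.cos (θ / 2)) ^ (2 * β + 1)
            * (((θ + φ) ^ (-2 * α - 1) * (2 * π - θ - φ) ^ (-2 * β - 1)
              * |θ - φ| ^ (2 * σ - 1)) ^ q))
        ≤ ENNReal.ofReal (C₀ * (θ ^ (-sa) + (π - θ) ^ (-sb)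
            + |θ - φ| ^ (-sa) + |θ - φ| ^ (-sb))) := by
          apply ENNReal.ofReal_le_ofReal
          calc _ = ((θ + φ) ^ (-2*α - 1) * (2*π - θ - φ) ^ (-2*β - 1)
                * |θ - φ| ^ (2*σ - 1)) ^ q
              * (Real.sin (θ/2) ^ (2*α + 1) * Real.cos (θ/2) ^ (2*β + 1)) := by ring
            _ ≤ _ := hb
      _ = _ := by
          rw [ENNReal.ofReal_mul hC₀.le,
            ENNReal.ofReal_add (add_nonneg (add_nonneg (Real.rpow_nonneg hθ0.le _)
                (Real.rpow_nonneg (by linarith : (0:ℝ) ≤ π - θ) _))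
                (Real.rpow_nonneg (abs_nonneg _) _))
              (Real.rpow_nonneg (abs_nonneg _) _),
            ENNReal.ofReal_add (add_nonneg (Real.rpow_nonneg hθ0.le _)
                (Real.rpow_nonneg (by linarith : (0:ℝ) ≤ π - θ) _))
              (Real.rpow_nonneg (abs_nonneg _) _),
            ENNReal.ofReal_add (Real.rpow_nonneg hθ0.le _)
              (Real.rpow_nonneg (by linarith : (0:ℝ) ≤ π - θ) _)]
  refine le_trans (lintegral_mono_ae hbound) ?_
  rw [lintegral_const_mul' _ _ ENNReal.ofReal_ne_top]
  have m1 : Measurable fun θ : ℝ => ENNReal.ofReal (|θ - (0:ℝ)| ^ (-sa)) := by fun_prop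
  have m2 : Measurable fun θ : ℝ => ENNReal.ofReal (|θ - π| ^ (-sb)) := by fun_prop
  have m3 : Measurable fun θ : ℝ => ENNReal.ofReal (|θ - φ| ^ (-sa)) := by fun_prop
  rw [lintegral_add_left ((m1.fun_add m2).fun_add m3), lintegral_add_left (m1.fun_add m2),
        lintegral_add_left m1]
  have i1 := intBound sa 0 hsa0 hsa1 le_rfl hπ.le
  have i2 := intBound sb π hsb0 hsb1 hπ.le le_rfl
  have i3 := intBound sa φ hsa0 hsa1 hφ.1.le hφ.2.le
  have i4 := intBound sb φ hsb0 hsb1 hφ.1.le hφ.2.le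
  have hsum : ENNReal.ofReal (2*π/(1-sa)) + ENNReal.ofReal (2*π/(1-sb))
          + ENNReal.ofReal (2*π/(1-sa)) + ENNReal.ofReal (2*π/(1-sb))
          = ENNReal.ofReal (2*π/(1-sa) + 2*π/(1-sb) + 2*π/(1-sa) + 2*π/(1-sb)) := by
    rw [← ENNReal.ofReal_add (div_nonneg (by positivity) (by linarith))
        (div_nonneg (by positivity) (by linarith)),
      ← ENNReal.ofReal_add (add_nonneg (div_nonneg (by positivity) (by linarith))
        (div_nonneg (by positivity) (by linarith)))
        (div_nonneg (by positivity) (by linarith)),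
      ← ENNReal.ofReal_add (add_nonneg (add_nonneg
          (div_nonneg (by positivity) (by linarith))
          (div_nonneg (by positivity) (by linarith)))
        (div_nonneg (by positivity) (by linarith)))
        (div_nonneg (by positivity) (by linarith))]
  rw [ENNReal.ofReal_mul hC₀.le, ← hsum]
  gcongr <;> first | exact i1 | exact i2 | exact i3 | exact i4

lemma holder_aux {X : Type*} [MeasurableSpace X] (μ : Measure X) (g h : X → ℝ≥0∞)
    (hg : AEMeasurable g μ) (hh : AEMeasurable h μ) (q : ℝ) (hq : 1 ≤ q) :
    ∫⁻ x, g x * h x ∂μ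
      ≤ (∫⁻ x, g x ^ q * h x ∂μ) ^ (1/q) * (∫⁻ x, h x ∂μ) ^ (1 - 1/q) := by
  rcases eq_or_lt_of_le hq with rfl | hq1
  · simp [ENNReal.rpow_one]
  · have hq0 : (0:ℝ) < q := by linarith
    set r := Real.conjExponent q with hr
    have hpq : Real.HolderConjugate q r := Real.HolderConjugate.conjExponent hq1
    have hinv : 1/r = 1 - 1/q := by
      have := hpq.inv_add_inv_eq_one
      rw [one_div, one_div]; linarith [this]
    have hF : AEMeasurable (fun x => g x * h x ^ (1/q)) μ :=
      hg.mul (hh.pow_const _)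
    have hG : AEMeasurable (fun x => h x ^ (1 - 1/q)) μ := hh.pow_const _
    have key := ENNReal.lintegral_mul_le_Lp_mul_Lq μ hpq hF hG
    have hinvq : 1/q ≤ 1 := by rw [div_le_one hq0]; linarith
    have e1 : ∀ x, (fun x => g x * h x ^ (1/q)) x * (fun x => h x ^ (1 - 1/q)) x
        = g x * h x := by
      intro x
      simp only []
      rw [mul_assoc, ← ENNReal.rpow_add_of_nonneg _ _ (by positivity) (by linarith [hinvq]),
        show 1/q + (1 - 1/q) = 1 by ring, ENNReal.rpow_one]
    have e2 : ∀ x, ((fun x => g x * h x ^ (1/q)) x) ^ q = g x ^ q * h x := by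
      intro x
      simp only []
      rw [ENNReal.mul_rpow_of_nonneg _ _ hq0.le, ← ENNReal.rpow_mul,
        one_div, inv_mul_cancel₀ hq0.ne', ENNReal.rpow_one]
    have e3 : ∀ x, ((fun x => h x ^ (1 - 1/q)) x) ^ r = h x := by
      intro x
      simp only []
      rw [← ENNReal.rpow_mul, ← hinv, one_div, inv_mul_cancel₀ hpq.symm.pos.ne',
        ENNReal.rpow_one]
    calc ∫⁻ x, g x * h x ∂μ
        = ∫⁻ x, (fun x => g x * h x ^ (1/q)) x * (fun x => h x ^ (1 - 1/q)) x ∂μ := by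
          simp_rw [e1]
      _ ≤ (∫⁻ x, ((fun x => g x * h x ^ (1/q)) x) ^ q ∂μ) ^ (1/q)
          * (∫⁻ x, ((fun x => h x ^ (1 - 1/q)) x) ^ r ∂μ) ^ (1/r) := key
      _ = (∫⁻ x, g x ^ q * h x ∂μ) ^ (1/q) * (∫⁻ x, h x ∂μ) ^ (1 - 1/q) := by
          simp_rw [e2, e3, hinv]

lemma part2 (α β σ q : ℝ) (hq1 : 1 ≤ q) (C : ℝ) (hC : 0 < C)
    (hint : ∀ φ ∈ Set.Ioo (0 : ℝ) π,
      (∫⁻ θ, ENNReal.ofReal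
          (((θ + φ) ^ (-2 * α - 1) * (2 * π - θ - φ) ^ (-2 * β - 1) * |θ - φ| ^ (2 * σ - 1)) ^ q)
        ∂(jacobiMeasure α β)) ≤ ENNReal.ofReal C) :
    ∃ C₂ : ℝ, 0 < C₂ ∧ ∀ f : ℝ → ℝ, Integrable f (jacobiMeasure α β) →
      eLpNorm (fun θ => ∫ φ,
            ((θ + φ) ^ (-2 * α - 1) * (2 * π - θ - φ) ^ (-2 * β - 1) * |θ - φ| ^ (2 * σ - 1)) * f φ
          ∂(jacobiMeasure α β)) (ENNReal.ofReal q) (jacobiMeasure α β)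
        ≤ ENNReal.ofReal (C₂ * ∫ φ, |f φ| ∂(jacobiMeasure α β)) := by
  have hq0 : (0:ℝ) < q := by linarith
  set μ := jacobiMeasure α β with hμ
  have hmem : ∀ᵐ θ ∂μ, θ ∈ Ioo (0:ℝ) π := by
    rw [hμ, jacobiMeasure]
    exact Filter.Eventually.filter_mono (withDensity_absolutelyContinuous _ _).ae_le
      (ae_restrict_mem measurableSet_Ioo)
  have hKnn : ∀ θ φ : ℝ, θ ∈ Ioo (0:ℝ) π → φ ∈ Ioo (0:ℝ) π →
      0 ≤ (θ + φ) ^ (-2 * α - 1) * (2 * π - θ - φ) ^ (-2 * β - 1) * |θ - φ| ^ (2 * σ - 1) := by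
    intro θ φ hθ hφ
    have h1 : (0:ℝ) ≤ θ + φ := by linarith [hθ.1, hφ.1]
    have h2 : (0:ℝ) ≤ 2 * π - θ - φ := by linarith [hθ.2, hφ.2]
    exact mul_nonneg (mul_nonneg (Real.rpow_nonneg h1 _) (Real.rpow_nonneg h2 _))
      (Real.rpow_nonneg (abs_nonneg _) _)
  have hKqm : ∀ φ : ℝ, Measurable (fun θ : ℝ => ENNReal.ofReal
      (((θ + φ) ^ (-2 * α - 1) * (2 * π - θ - φ) ^ (-2 * β - 1)
        * |θ - φ| ^ (2 * σ - 1)) ^ q)) := by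
    intro φ; fun_prop
  have hKm : ∀ θ : ℝ, Measurable (fun φ : ℝ => ENNReal.ofReal
      ((θ + φ) ^ (-2 * α - 1) * (2 * π - θ - φ) ^ (-2 * β - 1) * |θ - φ| ^ (2 * σ - 1))) := by
    intro θ; fun_prop
  haveI hsf : SFinite μ := by
    rw [hμ]; unfold jacobiMeasure; infer_instance
  refine ⟨C ^ (1/q), by positivity, fun f hf => ?_⟩
  have hfa : AEMeasurable f μ := hf.aemeasurable
  have hfabs : AEMeasurable (fun φ => ENNReal.ofReal |f φ|) μ :=
    (measurable_abs.comp_aemeasurable hfa).ennreal_ofReal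
  have hfin : ∫⁻ φ, ENNReal.ofReal |f φ| ∂μ = ENNReal.ofReal (∫ φ, |f φ| ∂μ) :=
    (ofReal_integral_eq_lintegral_ofReal hf.abs
      (Filter.Eventually.of_forall fun x => abs_nonneg _)).symm
  have hfin_ne : ∫⁻ φ, ENNReal.ofReal |f φ| ∂μ ≠ ∞ := by
    rw [hfin]; exact ENNReal.ofReal_ne_top
  -- pointwise (in θ) bound
  have step_ae : ∀ᵐ θ ∂μ, (‖∫ φ, ((θ + φ) ^ (-2 * α - 1) * (2 * π - θ - φ) ^ (-2 * β - 1)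
          * |θ - φ| ^ (2 * σ - 1)) * f φ ∂μ‖₊ : ℝ≥0∞) ^ q
      ≤ (∫⁻ φ, ENNReal.ofReal (((θ + φ) ^ (-2 * α - 1) * (2 * π - θ - φ) ^ (-2 * β - 1)
            * |θ - φ| ^ (2 * σ - 1)) ^ q) * ENNReal.ofReal |f φ| ∂μ)
          * (∫⁻ φ, ENNReal.ofReal |f φ| ∂μ) ^ (q - 1) := by
    filter_upwards [hmem] with θ hθ
    have h1 : (‖∫ φ, ((θ + φ) ^ (-2 * α - 1) * (2 * π - θ - φ) ^ (-2 * β - 1)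
          * |θ - φ| ^ (2 * σ - 1)) * f φ ∂μ‖₊ : ℝ≥0∞)
        ≤ ∫⁻ φ, ENNReal.ofReal ((θ + φ) ^ (-2 * α - 1) * (2 * π - θ - φ) ^ (-2 * β - 1)
            * |θ - φ| ^ (2 * σ - 1)) * ENNReal.ofReal |f φ| ∂μ := by
      refine le_trans (enorm_integral_le_lintegral_enorm _) (le_of_eq ?_)
      apply lintegral_congr_ae
      filter_upwards [hmem] with φ hφ
      rw [Real.enorm_eq_ofReal_abs, abs_mul, abs_of_nonneg (hKnn θ φ hθ hφ),
        ENNReal.ofReal_mul (hKnn θ φ hθ hφ)]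
    have h2 := holder_aux μ
      (fun φ => ENNReal.ofReal ((θ + φ) ^ (-2 * α - 1) * (2 * π - θ - φ) ^ (-2 * β - 1)
        * |θ - φ| ^ (2 * σ - 1)))
      (fun φ => ENNReal.ofReal |f φ|) (hKm θ).aemeasurable hfabs q hq1
    have h3 : (∫⁻ φ, (ENNReal.ofReal ((θ + φ) ^ (-2 * α - 1) * (2 * π - θ - φ) ^ (-2 * β - 1)
            * |θ - φ| ^ (2 * σ - 1))) ^ q * ENNReal.ofReal |f φ| ∂μ)
        = ∫⁻ φ, ENNReal.ofReal (((θ + φ) ^ (-2 * α - 1) * (2 * π - θ - φ) ^ (-2 * β - 1)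
            * |θ - φ| ^ (2 * σ - 1)) ^ q) * ENNReal.ofReal |f φ| ∂μ := by
      apply lintegral_congr_ae
      filter_upwards [hmem] with φ hφ
      rw [← ENNReal.ofReal_rpow_of_nonneg (hKnn θ φ hθ hφ) hq0.le]
    rw [h3] at h2
    have h4 := ENNReal.rpow_le_rpow (h1.trans h2) hq0.le
    refine h4.trans_eq ?_
    rw [ENNReal.mul_rpow_of_nonneg _ _ hq0.le, ← ENNReal.rpow_mul, ← ENNReal.rpow_mul,
      show 1/q * q = 1 by field_simp, show (1 - 1/q) * q = q - 1 by field_simp,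
      ENNReal.rpow_one]
  -- integrate in θ and swap
  have hprod : AEMeasurable (fun p : ℝ × ℝ => ENNReal.ofReal
      (((p.1 + p.2) ^ (-2 * α - 1) * (2 * π - p.1 - p.2) ^ (-2 * β - 1)
        * |p.1 - p.2| ^ (2 * σ - 1)) ^ q) * ENNReal.ofReal |f p.2|) (μ.prod μ) := by
    apply AEMeasurable.fun_mul
    · apply Measurable.aemeasurable; fun_prop
    · exact (measurable_abs.comp_aemeasurable
        (hfa.comp_quasiMeasurePreserving Measure.quasiMeasurePreserving_snd)).ennreal_ofReal
  have hfq_ne : (∫⁻ φ, ENNReal.ofReal |f φ| ∂μ) ^ (q - 1) ≠ ∞ :=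
    ENNReal.rpow_ne_top_of_nonneg (by linarith) hfin_ne
  have big : ∫⁻ θ, (‖∫ φ, ((θ + φ) ^ (-2 * α - 1) * (2 * π - θ - φ) ^ (-2 * β - 1)
          * |θ - φ| ^ (2 * σ - 1)) * f φ ∂μ‖₊ : ℝ≥0∞) ^ q ∂μ
      ≤ ENNReal.ofReal C * (∫⁻ φ, ENNReal.ofReal |f φ| ∂μ) ^ q := by
    refine le_trans (lintegral_mono_ae step_ae) ?_
    rw [lintegral_mul_const' _ _ hfq_ne]
    have hswap : ∫⁻ θ, ∫⁻ φ, ENNReal.ofReal (((θ + φ) ^ (-2 * α - 1)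
          * (2 * π - θ - φ) ^ (-2 * β - 1) * |θ - φ| ^ (2 * σ - 1)) ^ q)
          * ENNReal.ofReal |f φ| ∂μ ∂μ
        = ∫⁻ φ, ∫⁻ θ, ENNReal.ofReal (((θ + φ) ^ (-2 * α - 1)
          * (2 * π - θ - φ) ^ (-2 * β - 1) * |θ - φ| ^ (2 * σ - 1)) ^ q)
          * ENNReal.ofReal |f φ| ∂μ ∂μ := lintegral_lintegral_swap hprod
    rw [hswap]
    have hinner : ∀ᵐ φ ∂μ, (∫⁻ θ, ENNReal.ofReal (((θ + φ) ^ (-2 * α - 1)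
          * (2 * π - θ - φ) ^ (-2 * β - 1) * |θ - φ| ^ (2 * σ - 1)) ^ q)
          * ENNReal.ofReal |f φ| ∂μ)
        ≤ ENNReal.ofReal C * ENNReal.ofReal |f φ| := by
      filter_upwards [hmem] with φ hφ
      rw [lintegral_mul_const' _ _ ENNReal.ofReal_ne_top]
      exact mul_le_mul_left (hint φ hφ) _
    calc (∫⁻ φ, ∫⁻ θ, ENNReal.ofReal (((θ + φ) ^ (-2 * α - 1)
          * (2 * π - θ - φ) ^ (-2 * β - 1) * |θ - φ| ^ (2 * σ - 1)) ^ q)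
          * ENNReal.ofReal |f φ| ∂μ ∂μ) * (∫⁻ φ, ENNReal.ofReal |f φ| ∂μ) ^ (q - 1)
        ≤ (∫⁻ φ, ENNReal.ofReal C * ENNReal.ofReal |f φ| ∂μ)
          * (∫⁻ φ, ENNReal.ofReal |f φ| ∂μ) ^ (q - 1) :=
          mul_le_mul_left (lintegral_mono_ae hinner) _
      _ = ENNReal.ofReal C * ((∫⁻ φ, ENNReal.ofReal |f φ| ∂μ)
          * (∫⁻ φ, ENNReal.ofReal |f φ| ∂μ) ^ (q - 1)) := by
          rw [lintegral_const_mul' _ _ ENNReal.ofReal_ne_top, mul_assoc]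
      _ = ENNReal.ofReal C * (∫⁻ φ, ENNReal.ofReal |f φ| ∂μ) ^ q := by
          congr 1
          calc (∫⁻ φ, ENNReal.ofReal |f φ| ∂μ) * (∫⁻ φ, ENNReal.ofReal |f φ| ∂μ) ^ (q - 1)
              = (∫⁻ φ, ENNReal.ofReal |f φ| ∂μ) ^ (1:ℝ)
                * (∫⁻ φ, ENNReal.ofReal |f φ| ∂μ) ^ (q - 1) := by rw [ENNReal.rpow_one]
            _ = (∫⁻ φ, ENNReal.ofReal |f φ| ∂μ) ^ (1 + (q - 1)) :=
                (ENNReal.rpow_add_of_nonneg _ _ (by norm_num) (by linarith)).symm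
            _ = _ := by norm_num
  -- conclude
  have hqne : (ENNReal.ofReal q) ≠ 0 := by
    simp only [ne_eq, ENNReal.ofReal_eq_zero, not_le]; linarith
  rw [eLpNorm_eq_lintegral_rpow_enorm_toReal hqne ENNReal.ofReal_ne_top,
    ENNReal.toReal_ofReal hq0.le]
  calc (∫⁻ θ, (‖∫ φ, ((θ + φ) ^ (-2 * α - 1) * (2 * π - θ - φ) ^ (-2 * β - 1)
          * |θ - φ| ^ (2 * σ - 1)) * f φ ∂μ‖₊ : ℝ≥0∞) ^ q ∂μ) ^ (1/q)
      ≤ (ENNReal.ofReal C * (∫⁻ φ, ENNReal.ofReal |f φ| ∂μ) ^ q) ^ (1/q) :=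
        ENNReal.rpow_le_rpow big (by positivity)
    _ = ENNReal.ofReal (C ^ (1/q) * ∫ φ, |f φ| ∂μ) := by
        rw [ENNReal.mul_rpow_of_nonneg _ _ (by positivity), ← ENNReal.rpow_mul,
          show q * (1/q) = 1 by field_simp, ENNReal.rpow_one, hfin,
          ENNReal.ofReal_rpow_of_pos hC, ← ENNReal.ofReal_mul (by positivity)]


theorem stmt17 (α β σ q : ℝ) (hα : -1 < α) (hβ : -1 < β) (hσ0 : 0 < σ) (hσ : σ < 1/2)
    (hq1 : 1 ≤ q)
    (hq : q < max (max (α + 1) (β + 1)) (1/2) / (max (max (α + 1) (β + 1)) (1/2) - σ)) :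
    (∃ C : ℝ, 0 < C ∧ ∀ φ ∈ Set.Ioo (0 : ℝ) π,
      (∫⁻ θ, ENNReal.ofReal
          (((θ + φ) ^ (-2 * α - 1) * (2 * π - θ - φ) ^ (-2 * β - 1) * |θ - φ| ^ (2 * σ - 1)) ^ q)
        ∂(jacobiMeasure α β)) ≤ ENNReal.ofReal C) ∧
    (∃ C : ℝ, 0 < C ∧ ∀ f : ℝ → ℝ, Integrable f (jacobiMeasure α β) →
      eLpNorm (fun θ => ∫ φ,
            ((θ + φ) ^ (-2 * α - 1) * (2 * π - θ - φ) ^ (-2 * β - 1) * |θ - φ| ^ (2 * σ - 1)) * f φ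
          ∂(jacobiMeasure α β)) (ENNReal.ofReal q) (jacobiMeasure α β)
        ≤ ENNReal.ofReal (C * ∫ φ, |f φ| ∂(jacobiMeasure α β))) := by
  obtain ⟨C, hC, h1⟩ := part1 α β σ q hα hβ hσ0 hσ hq1 hq
  exact ⟨⟨C, hC, h1⟩, part2 α β σ q hq1 C hC h1⟩
end

section
/- Let κ ∈ (−1/2, 0) and let T be the integral operator on (0,π) (with Lebesgue measure) with kernel K(θ,φ) = (θφ)^κ · ((π−θ)(π−φ))^κ. If 1/p < 1+κ and 1/q > −κ for 1 ≤ p, q ≤ ∞, then T is bounded from L^p(0,π) to L^q(0,π). Moreover, for f = χ_{(0,1)} one has Tf(θ) ≳ θ^κ for θ ∈ (0,1), and hence T is not bounded from L^p(0,π) into L^{−1/κ}(0,π) for any p with 1/p < 1+κ. -/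
open Real MeasureTheory Set
open scoped ENNReal

lemma aux_meas (κ : ℝ) : Measurable (fun x : ℝ => x ^ κ * (π - x) ^ κ) := by fun_prop

lemma aux_int {t : ℝ} (ht : -1 < t) (ht0 : t ≤ 0) :
    IntegrableOn (fun x : ℝ => x ^ t * (π - x) ^ t) (Ioo 0 π) := by
  have hπ := Real.pi_pos
  have h2 : (0:ℝ) < π / 2 := by linarith
  have hmeas := (aux_meas t).aestronglyMeasurable (μ := volume)
  have h1 : IntegrableOn (fun x : ℝ => x ^ t * (π - x) ^ t) (Ioc 0 (π/2)) := by
    have hg : IntegrableOn (fun x : ℝ => (π/2) ^ t * x ^ t) (Ioc 0 (π/2)) :=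
      ((intervalIntegrable_iff_integrableOn_Ioc_of_le h2.le).mp
        (intervalIntegral.intervalIntegrable_rpow' ht)).const_mul _
    refine Integrable.mono' hg (hmeas.restrict) ?_
    refine (ae_restrict_iff' measurableSet_Ioc).2 (ae_of_all _ fun x hx => ?_)
    have hx0 : (0:ℝ) < x := hx.1
    have hpx : π/2 ≤ π - x := by linarith [hx.2]
    have hb : (π - x) ^ t ≤ (π/2) ^ t := Real.rpow_le_rpow_of_nonpos h2 hpx ht0
    have h2' : (0:ℝ) ≤ x ^ t := Real.rpow_nonneg hx0.le t
    rw [Real.norm_eq_abs, abs_of_nonneg (mul_nonneg h2' (Real.rpow_nonneg (by linarith [hx.2]) t))]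
    calc x ^ t * (π - x) ^ t ≤ x ^ t * (π/2) ^ t := mul_le_mul_of_nonneg_left hb h2'
      _ = (π/2) ^ t * x ^ t := mul_comm _ _
  have h2i : IntegrableOn (fun x : ℝ => x ^ t * (π - x) ^ t) (Ioc (π/2) π) := by
    have hrefl : IntervalIntegrable (fun x : ℝ => (π - x) ^ t) volume (π - (π/2)) (π - 0) :=
      (intervalIntegral.intervalIntegrable_rpow' ht).comp_sub_left π
    rw [sub_zero, show π - π/2 = π/2 by ring] at hrefl
    have hg : IntegrableOn (fun x : ℝ => (π/2) ^ t * (π - x) ^ t) (Ioc (π/2) π) :=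
      ((intervalIntegrable_iff_integrableOn_Ioc_of_le (by linarith)).mp hrefl).const_mul _
    refine Integrable.mono' hg (hmeas.restrict) ?_
    refine (ae_restrict_iff' measurableSet_Ioc).2 (ae_of_all _ fun x hx => ?_)
    have hx0 : (0:ℝ) < x := lt_trans h2 hx.1
    have hpx : (0:ℝ) ≤ π - x := by linarith [hx.2]
    have hb : x ^ t ≤ (π/2) ^ t := Real.rpow_le_rpow_of_nonpos h2 hx.1.le ht0
    have h2' : (0:ℝ) ≤ (π - x) ^ t := Real.rpow_nonneg hpx t
    rw [Real.norm_eq_abs, abs_of_nonneg (mul_nonneg (Real.rpow_nonneg hx0.le t) h2')]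
    exact mul_le_mul_of_nonneg_right hb h2'
  refine ((h1.union h2i).mono_set ?_)
  rw [Set.Ioc_union_Ioc_eq_Ioc (by linarith : (0:ℝ) ≤ π/2) (by linarith : π/2 ≤ π)]
  exact Set.Ioo_subset_Ioc_self

lemma aux_mem {κ : ℝ} (hκ1 : -1 < κ) (hκ0 : κ < 0) (r : ℝ≥0∞) (hr : 1 ≤ r)
    (hrc : -κ < (r⁻¹).toReal) :
    MemLp (fun x : ℝ => x ^ κ * (π - x) ^ κ) r (volume.restrict (Ioo 0 π)) := by
  have hr0 : r ≠ 0 := by intro h; simp [h] at hr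
  have hrtop : r ≠ ∞ := by
    intro h; rw [h] at hrc; simp at hrc; linarith
  set s : ℝ := r.toReal with hs
  have hs1 : (1:ℝ) ≤ s := by
    have := ENNReal.toReal_mono hrtop hr
    simpa using this
  have hs0 : (0:ℝ) < s := by linarith
  have hks : -1 < κ * s := by
    have h1 : (r⁻¹).toReal = s⁻¹ := by rw [ENNReal.toReal_inv]
    rw [h1] at hrc
    have := (mul_lt_mul_of_pos_right hrc hs0)
    rw [inv_mul_cancel₀ hs0.ne'] at this
    nlinarith
  have hks0 : κ * s ≤ 0 := mul_nonpos_of_nonpos_of_nonneg hκ0.le hs0.le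
  have hint : IntegrableOn (fun x : ℝ => x ^ (κ*s) * (π - x) ^ (κ*s)) (Ioo 0 π) :=
    aux_int hks hks0
  have hint2 : IntegrableOn (fun x : ℝ => ‖x ^ κ * (π - x) ^ κ‖ ^ s) (Ioo 0 π) := by
    refine hint.congr_fun (fun x hx => ?_) measurableSet_Ioo
    have hx0 : (0:ℝ) ≤ x := hx.1.le
    have hpx : (0:ℝ) ≤ π - x := by linarith [hx.2]
    rw [Real.norm_eq_abs,
      abs_of_nonneg (mul_nonneg (Real.rpow_nonneg hx0 κ) (Real.rpow_nonneg hpx κ)),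
      Real.mul_rpow (Real.rpow_nonneg hx0 κ) (Real.rpow_nonneg hpx κ),
      ← Real.rpow_mul hx0, ← Real.rpow_mul hpx]
  refine (memLp_norm_rpow_iff (p := r) (q := r) (μ := volume.restrict (Ioo 0 π))
    ((aux_meas κ).aestronglyMeasurable) hr0 hrtop).mp ?_
  rw [ENNReal.div_self hr0 hrtop, memLp_one_iff_integrable]
  exact hint2

lemma aux_part2 {κ : ℝ} (hκ1 : -1/2 < κ) (hκ0 : κ < 0) :
    ∃ c : ℝ, 0 < c ∧ ∀ θ ∈ Set.Ioo (0 : ℝ) 1,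
      c * θ ^ κ ≤ ∫ φ in Set.Ioo (0 : ℝ) π,
        ((θ * φ) ^ κ * ((π - θ) * (π - φ)) ^ κ) * Set.indicator (Set.Ioo (0 : ℝ) 1) 1 φ := by
  have hπ := Real.pi_pos
  have hπ1 : (1:ℝ) < π := by linarith [Real.pi_gt_three]
  set g : ℝ → ℝ := fun x => x ^ κ * (π - x) ^ κ with hg
  set J : ℝ := ∫ φ in Set.Ioo (0:ℝ) 1, g φ with hJdef
  have hJint : IntegrableOn g (Ioo 0 1) :=
    (aux_int (by linarith) hκ0.le).mono_set (Set.Ioo_subset_Ioo le_rfl hπ1.le)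
  have hJ : π ^ κ ≤ J := by
    have h := setIntegral_ge_of_const_le (μ := volume) (c := π ^ κ)
      measurableSet_Ioo (by simp) (fun φ hφ => ?_) hJint
    · simpa using h
    · have h1 : (1:ℝ) ≤ φ ^ κ :=
        Real.one_le_rpow_of_pos_of_le_one_of_nonpos hφ.1 hφ.2.le hκ0.le
      have h2 : π ^ κ ≤ (π - φ) ^ κ :=
        Real.rpow_le_rpow_of_nonpos (by linarith [hφ.2] : (0:ℝ) < π - φ)
          (by linarith [hφ.1]) hκ0.le
      calc π ^ κ = 1 * π ^ κ := (one_mul _).symm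
        _ ≤ φ ^ κ * (π - φ) ^ κ :=
          mul_le_mul h1 h2 (Real.rpow_nonneg hπ.le κ) (by positivity)
  have hJ0 : (0:ℝ) < J := lt_of_lt_of_le (Real.rpow_pos_of_pos hπ κ) hJ
  refine ⟨π ^ κ * J, by positivity, fun θ hθ => ?_⟩
  have hθπ : θ ∈ Ioo (0:ℝ) π := ⟨hθ.1, by linarith [hθ.2]⟩
  have hint_eq : (∫ φ in Set.Ioo (0:ℝ) π,
      ((θ * φ) ^ κ * ((π - θ) * (π - φ)) ^ κ) * Set.indicator (Set.Ioo (0:ℝ) 1) 1 φ)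
      = g θ * J := by
    have step1 : (∫ φ in Set.Ioo (0:ℝ) π,
        ((θ * φ) ^ κ * ((π - θ) * (π - φ)) ^ κ) * Set.indicator (Set.Ioo (0:ℝ) 1) 1 φ)
        = ∫ φ in Set.Ioo (0:ℝ) π, g θ * Set.indicator (Set.Ioo (0:ℝ) 1) g φ := by
      refine setIntegral_congr_fun measurableSet_Ioo (fun φ hφ => ?_)
      rw [Real.mul_rpow hθπ.1.le hφ.1.le,
        Real.mul_rpow (by linarith [hθπ.2] : (0:ℝ) ≤ π - θ) (by linarith [hφ.2] : (0:ℝ) ≤ π - φ)]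
      by_cases hmem : φ ∈ Set.Ioo (0:ℝ) 1
      · rw [Set.indicator_of_mem hmem, Set.indicator_of_mem hmem, hg]; simp; ring
      · rw [Set.indicator_of_notMem hmem, Set.indicator_of_notMem hmem]; ring
    rw [step1, integral_const_mul]
    congr 1
    rw [integral_indicator measurableSet_Ioo, Measure.restrict_restrict measurableSet_Ioo,
      Set.inter_eq_self_of_subset_left (Set.Ioo_subset_Ioo le_rfl hπ1.le)]
  rw [hint_eq]
  have hb : π ^ κ ≤ (π - θ) ^ κ :=
    Real.rpow_le_rpow_of_nonpos (by linarith [hθπ.2]) (by linarith [hθ.1]) hκ0.le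
  have hθκ : (0:ℝ) ≤ θ ^ κ := Real.rpow_nonneg hθ.1.le κ
  calc π ^ κ * J * θ ^ κ = π ^ κ * (θ ^ κ * J) := by ring
    _ ≤ (π - θ) ^ κ * (θ ^ κ * J) :=
        mul_le_mul_of_nonneg_right hb (mul_nonneg hθκ hJ0.le)
    _ = g θ * J := by rw [hg]; ring

theorem stmt19 (κ : ℝ) (hκ1 : -1/2 < κ) (hκ0 : κ < 0) :
    (∀ p q : ℝ≥0∞, 1 ≤ p → 1 ≤ q → (p⁻¹).toReal < 1 + κ → -κ < (q⁻¹).toReal →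
      ∃ C : ℝ, 0 < C ∧ ∀ f : ℝ → ℝ, MemLp f p (volume.restrict (Set.Ioo 0 π)) →
        eLpNorm (fun θ => ∫ φ in Set.Ioo (0 : ℝ) π,
              ((θ * φ) ^ κ * ((π - θ) * (π - φ)) ^ κ) * f φ) q (volume.restrict (Set.Ioo 0 π))
          ≤ ENNReal.ofReal C * eLpNorm f p (volume.restrict (Set.Ioo 0 π))) ∧
    (∃ c : ℝ, 0 < c ∧ ∀ θ ∈ Set.Ioo (0 : ℝ) 1,
      c * θ ^ κ ≤ ∫ φ in Set.Ioo (0 : ℝ) π,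
        ((θ * φ) ^ κ * ((π - θ) * (π - φ)) ^ κ) * Set.indicator (Set.Ioo (0 : ℝ) 1) 1 φ) ∧
    (∀ p : ℝ≥0∞, 1 ≤ p → (p⁻¹).toReal < 1 + κ →
      ¬ ∃ C : ℝ, 0 < C ∧ ∀ f : ℝ → ℝ, MemLp f p (volume.restrict (Set.Ioo 0 π)) →
        eLpNorm (fun θ => ∫ φ in Set.Ioo (0 : ℝ) π,
              ((θ * φ) ^ κ * ((π - θ) * (π - φ)) ^ κ) * f φ) (ENNReal.ofReal (-1/κ))
            (volume.restrict (Set.Ioo 0 π))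
          ≤ ENNReal.ofReal C * eLpNorm f p (volume.restrict (Set.Ioo 0 π))) := by
  have hπ := Real.pi_pos
  have hπ1 : (1:ℝ) < π := by linarith [Real.pi_gt_three]
  have hκ1' : (-1:ℝ) < κ := by linarith
  set μ := volume.restrict (Set.Ioo (0:ℝ) π) with hμ
  set g : ℝ → ℝ := fun x => x ^ κ * (π - x) ^ κ with hg
  -- Part 1
  have part1 : ∀ p q : ℝ≥0∞, 1 ≤ p → 1 ≤ q → (p⁻¹).toReal < 1 + κ → -κ < (q⁻¹).toReal →
      ∃ C : ℝ, 0 < C ∧ ∀ f : ℝ → ℝ, MemLp f p μ →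
        eLpNorm (fun θ => ∫ φ in Set.Ioo (0 : ℝ) π,
              ((θ * φ) ^ κ * ((π - θ) * (π - φ)) ^ κ) * f φ) q μ
          ≤ ENNReal.ofReal C * eLpNorm f p μ := by
    intro p q hp hq hpc hqc
    have hgq : MemLp g q μ := aux_mem hκ1' hκ0 q hq hqc
    set p' : ℝ≥0∞ := (1 - p⁻¹)⁻¹ with hp'def
    have hple : p⁻¹ ≤ 1 := by simpa using ENNReal.inv_le_inv.2 hp
    have hp'inv : p'⁻¹ = 1 - p⁻¹ := by rw [hp'def, inv_inv]
    have hp'1 : 1 ≤ p' := by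
      rw [hp'def]
      calc (1:ℝ≥0∞) = 1⁻¹ := by simp
        _ ≤ (1 - p⁻¹)⁻¹ := ENNReal.inv_le_inv.2 tsub_le_self
    have hp'c : -κ < (p'⁻¹).toReal := by
      rw [hp'inv, ENNReal.toReal_sub_of_le hple ENNReal.one_ne_top]
      simp only [ENNReal.toReal_one]
      linarith
    have hgp' : MemLp g p' μ := aux_mem hκ1' hκ0 p' hp'1 hp'c
    have hconj : 1 / (1:ℝ≥0∞) = 1 / p' + 1 / p := by
      rw [one_div, one_div, one_div, hp'inv, tsub_add_cancel_of_le hple, inv_one]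
    set Np : ℝ≥0∞ := eLpNorm g p' μ with hNp
    set Nq : ℝ≥0∞ := eLpNorm g q μ with hNq
    have hNptop : Np ≠ ∞ := hgp'.2.ne
    have hNqtop : Nq ≠ ∞ := hgq.2.ne
    have hprod : Np * Nq ≠ ∞ := ENNReal.mul_ne_top hNptop hNqtop
    refine ⟨(Np * Nq).toReal + 1, by positivity, fun f hf => ?_⟩
    set I : ℝ := ∫ φ in Set.Ioo (0:ℝ) π, g φ * f φ with hIdef
    have heq : (fun θ => ∫ φ in Set.Ioo (0 : ℝ) π,
        ((θ * φ) ^ κ * ((π - θ) * (π - φ)) ^ κ) * f φ) =ᵐ[μ] fun θ => I * g θ := by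
      rw [hμ]
      refine (ae_restrict_iff' measurableSet_Ioo).2 (ae_of_all _ fun θ hθ => ?_)
      show (∫ φ in Set.Ioo (0:ℝ) π, ((θ * φ) ^ κ * ((π - θ) * (π - φ)) ^ κ) * f φ) = I * g θ
      rw [hIdef, ← integral_mul_const]
      refine setIntegral_congr_fun measurableSet_Ioo (fun φ hφ => ?_)
      rw [Real.mul_rpow hθ.1.le hφ.1.le,
        Real.mul_rpow (by linarith [hθ.2] : (0:ℝ) ≤ π - θ) (by linarith [hφ.2] : (0:ℝ) ≤ π - φ),
        hg]
      simp only
      ring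
    rw [eLpNorm_congr_ae heq]
    have hsmul : (fun θ => I * g θ) = I • g := by
      funext θ; simp [smul_eq_mul]
    rw [hsmul, eLpNorm_const_smul]
    have hI1 : (‖I‖₊ : ℝ≥0∞) ≤ eLpNorm (fun φ => g φ * f φ) 1 μ := by
      rw [eLpNorm_one_eq_lintegral_enorm]
      exact enorm_integral_le_lintegral_enorm _
    have hholder : eLpNorm (fun φ => g φ * f φ) 1 μ ≤ Np * eLpNorm f p μ := by
      have : (fun φ => g φ * f φ) = g • f := by funext φ; simp [smul_eq_mul]
      rw [this]
      exact eLpNorm_smul_le_mul_eLpNorm hf.1 ((aux_meas κ).aestronglyMeasurable)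
        (hpqr := ⟨by simpa only [one_div] using hconj.symm⟩)
    calc (‖I‖₊ : ℝ≥0∞) * Nq ≤ (Np * eLpNorm f p μ) * Nq :=
          mul_le_mul_left (hI1.trans hholder) Nq
      _ = (Np * Nq) * eLpNorm f p μ := by ring
      _ ≤ ENNReal.ofReal ((Np * Nq).toReal + 1) * eLpNorm f p μ := by
          refine mul_le_mul_left ?_ _
          calc Np * Nq = ENNReal.ofReal ((Np * Nq).toReal) :=
                (ENNReal.ofReal_toReal hprod).symm
            _ ≤ ENNReal.ofReal ((Np * Nq).toReal + 1) :=
                ENNReal.ofReal_le_ofReal (by linarith)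
  obtain ⟨c, hc, hlow⟩ := aux_part2 hκ1 hκ0
  refine ⟨part1, ⟨c, hc, hlow⟩, ?_⟩
  -- Part 3
  intro p hp hpc ⟨C, hC, hbound⟩
  set f : ℝ → ℝ := Set.indicator (Set.Ioo (0:ℝ) 1) 1 with hfdef
  have hfmem : MemLp f p μ := by
    have hne : μ (Set.Ioo (0:ℝ) 1) ≠ ∞ := by
      refine ne_of_lt (lt_of_le_of_lt (Measure.restrict_apply_le _ (Set.Ioo (0:ℝ) 1)) ?_)
      rw [Real.volume_Ioo]
      exact ENNReal.ofReal_lt_top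
    have h := memLp_indicator_const (μ := μ) p
      (measurableSet_Ioo (a := (0:ℝ)) (b := (1:ℝ))) (1:ℝ) (Or.inr hne)
    exact h
  have hle := hbound f hfmem
  have hRHS : ENNReal.ofReal C * eLpNorm f p μ < ∞ :=
    ENNReal.mul_lt_top ENNReal.ofReal_lt_top hfmem.2
  have hslt : (0:ℝ) < -1/κ := by
    rw [div_pos_iff]; right; constructor <;> linarith
  have hs : (ENNReal.ofReal (-1/κ)).toReal = -1/κ := ENNReal.toReal_ofReal hslt.le
  have hq0 : ENNReal.ofReal (-1/κ) ≠ 0 := by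
    simp only [ne_eq, ENNReal.ofReal_eq_zero, not_le]
    exact hslt
  have hqtop : ENNReal.ofReal (-1/κ) ≠ ∞ := ENNReal.ofReal_ne_top
  have hLHS : eLpNorm (fun θ => ∫ φ in Set.Ioo (0 : ℝ) π,
      ((θ * φ) ^ κ * ((π - θ) * (π - φ)) ^ κ) * f φ) (ENNReal.ofReal (-1/κ)) μ = ∞ := by
    set T : ℝ → ℝ := fun θ => ∫ φ in Set.Ioo (0 : ℝ) π,
      ((θ * φ) ^ κ * ((π - θ) * (π - φ)) ^ κ) * f φ with hT
    rw [eLpNorm_eq_lintegral_rpow_enorm_toReal hq0 hqtop, hs]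
    have hlint : (∫⁻ θ, (‖T θ‖₊ : ℝ≥0∞) ^ (-1/κ) ∂μ) = ∞ := by
      have hmono : (∫⁻ θ in Set.Ioo (0:ℝ) 1, (‖T θ‖₊ : ℝ≥0∞) ^ (-1/κ)) ≤
          ∫⁻ θ, (‖T θ‖₊ : ℝ≥0∞) ^ (-1/κ) ∂μ := by
        rw [hμ]
        exact lintegral_mono' (Measure.restrict_mono (Set.Ioo_subset_Ioo le_rfl hπ1.le) le_rfl)
          le_rfl
      rw [eq_top_iff]
      refine le_trans ?_ hmono
      have hlow2 : ∀ θ ∈ Set.Ioo (0:ℝ) 1,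
          ENNReal.ofReal ((c ^ (-1/κ)) * θ ^ (-1:ℝ)) ≤ (‖T θ‖₊ : ℝ≥0∞) ^ (-1/κ) := by
        intro θ hθ
        have h1 : ENNReal.ofReal (c * θ ^ κ) ≤ (‖T θ‖₊ : ℝ≥0∞) :=
          le_trans (ENNReal.ofReal_le_ofReal (hlow θ hθ)) (Real.ofReal_le_enorm _)
        have h2 := ENNReal.rpow_le_rpow h1 hslt.le
        have hcθ : (0:ℝ) < c * θ ^ κ := mul_pos hc (Real.rpow_pos_of_pos hθ.1 κ)
        rw [ENNReal.ofReal_rpow_of_pos hcθ] at h2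
        refine le_trans (le_of_eq ?_) h2
        congr 1
        rw [Real.mul_rpow hc.le (Real.rpow_nonneg hθ.1.le κ),
          ← Real.rpow_mul hθ.1.le,
          show κ * (-1/κ) = -1 by rw [mul_comm, div_mul_cancel₀ _ (ne_of_lt hκ0)]]
      calc (⊤:ℝ≥0∞) = ∫⁻ θ in Set.Ioo (0:ℝ) 1,
            ENNReal.ofReal ((c ^ (-1/κ)) * θ ^ (-1:ℝ)) := by
            symm
            have hc' : (0:ℝ) < c ^ (-1/κ) := Real.rpow_pos_of_pos hc _
            have : ∀ θ:ℝ, ENNReal.ofReal ((c ^ (-1/κ)) * θ ^ (-1:ℝ)) =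
                ENNReal.ofReal (c ^ (-1/κ)) * ENNReal.ofReal (θ ^ (-1:ℝ)) := fun θ =>
              ENNReal.ofReal_mul hc'.le
            simp_rw [this]
            rw [lintegral_const_mul' _ _ ENNReal.ofReal_ne_top]
            have hinf : (∫⁻ θ in Set.Ioo (0:ℝ) 1, ENNReal.ofReal (θ ^ (-1:ℝ))) = ∞ := by
              by_contra hfin
              have hint : IntegrableOn (fun x : ℝ => x ^ (-1:ℝ)) (Set.Ioo 0 1) := by
                constructor
                · exact ((measurable_id.aemeasurable (μ := volume.restrict (Set.Ioo (0:ℝ) 1))).pow_const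
                    (-1:ℝ)).aestronglyMeasurable
                · rw [hasFiniteIntegral_iff_norm]
                  have : ∀ᵐ x ∂(volume.restrict (Set.Ioo (0:ℝ) 1)),
                      ENNReal.ofReal ‖x ^ (-1:ℝ)‖ = ENNReal.ofReal (x ^ (-1:ℝ)) := by
                    refine (ae_restrict_iff' measurableSet_Ioo).2 (ae_of_all _ fun x hx => ?_)
                    rw [Real.norm_eq_abs, abs_of_nonneg (Real.rpow_nonneg hx.1.le _)]
                  rw [lintegral_congr_ae this]
                  exact lt_top_iff_ne_top.2 hfin
              rw [intervalIntegral.integrableOn_Ioo_rpow_iff zero_lt_one] at hint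
              linarith
            rw [hinf, ENNReal.mul_top (by simp only [ne_eq, ENNReal.ofReal_eq_zero, not_le]; exact hc')]
      _ ≤ ∫⁻ θ in Set.Ioo (0:ℝ) 1, (‖T θ‖₊ : ℝ≥0∞) ^ (-1/κ) :=
            setLIntegral_mono' measurableSet_Ioo hlow2
    rw [show (∫⁻ x, ‖T x‖ₑ ^ (-1/κ) ∂μ) = ∞ from hlint]
    exact ENNReal.top_rpow_of_pos (one_div_pos.2 hslt)
  rw [hLHS] at hle
  exact absurd (lt_of_le_of_lt hle hRHS) (lt_irrefl _)
end
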